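/- There exists a finite semigroup S such that every subsemigroup of S generated by at most 3 elements is Mal'cev nilpotent, but S itself is not Mal'cev nilpotent. -/

import Mathlib

/-- The pair (λ_n, ρ_n) computed in S¹ = `WithOne S`, where `z i` is the i-th
inserted element (only `z 1, …, z n` matter for the n-th term). -/
def lrho {S : Type*} [Semigroup S] (x y : WithOne S) (z : ℕ → WithOne S) :
    ℕ → WithOne S × WithOne S
  | 0 => (x, y)
  | n + 1 =>
    ((lrho x y z n).1 * z (n + 1) * (lrho x y z n).2,
     (lrho x y z n).2 * z (n + 1) * (lrho x y z n).1)

/-- A semigroup is Mal'cev nilpotent if for some `n ≥ 1`,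
`λ_n(a,b,c₁,…,c_n) = ρ_n(a,b,c₁,…,c_n)` for all `a b ∈ S`, `cᵢ ∈ S¹`. -/
def IsMN (S : Type*) [Semigroup S] : Prop :=
  ∃ n : ℕ, 0 < n ∧ ∀ (a b : S) (c : ℕ → WithOne S),
    (lrho (a : WithOne S) (b : WithOne S) c n).1 =
      (lrho (a : WithOne S) (b : WithOne S) c n).2

/-- Every subsemigroup of S generated by at most 3 elements is Mal'cev
nilpotent, but S is not. -/
def MNWitness (S : Type) [Semigroup S] : Prop :=
  ¬ IsMN S ∧
    ∀ A : Finset S, A.card ≤ 3 → IsMN (Subsemigroup.closure (A : Set S))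


/-! ### A concrete 19-element semigroup: rank-≤1 partial maps on 4 points,
    two rank-2 partial bijections `e17`, `e18`, and zero `e0`. -/

inductive S19 : Type where
  | e0 : S19
  | e1 : S19
  | e2 : S19
  | e3 : S19
  | e4 : S19
  | e5 : S19
  | e6 : S19
  | e7 : S19
  | e8 : S19
  | e9 : S19
  | e10 : S19
  | e11 : S19
  | e12 : S19
  | e13 : S19
  | e14 : S19
  | e15 : S19
  | e16 : S19
  | e17 : S19
  | e18 : S19
deriving DecidableEq

namespace S19

private def r0 : S19 → S19
  | e0 => e0
  | e1 => e0
  | e2 => e0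
  | e3 => e0
  | e4 => e0
  | e5 => e0
  | e6 => e0
  | e7 => e0
  | e8 => e0
  | e9 => e0
  | e10 => e0
  | e11 => e0
  | e12 => e0
  | e13 => e0
  | e14 => e0
  | e15 => e0
  | e16 => e0
  | e17 => e0
  | e18 => e0

private def r1 : S19 → S19
  | e0 => e0
  | e1 => e1
  | e2 => e0
  | e3 => e0
  | e4 => e0
  | e5 => e5
  | e6 => e0
  | e7 => e0
  | e8 => e0
  | e9 => e9
  | e10 => e0
  | e11 => e0
  | e12 => e0
  | e13 => e13
  | e14 => e0
  | e15 => e0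
  | e16 => e0
  | e17 => e0
  | e18 => e0

private def r2 : S19 → S19
  | e0 => e0
  | e1 => e2
  | e2 => e0
  | e3 => e0
  | e4 => e0
  | e5 => e6
  | e6 => e0
  | e7 => e0
  | e8 => e0
  | e9 => e10
  | e10 => e0
  | e11 => e0
  | e12 => e0
  | e13 => e14
  | e14 => e0
  | e15 => e0
  | e16 => e0
  | e17 => e0
  | e18 => e0

private def r3 : S19 → S19
  | e0 => e0
  | e1 => e3
  | e2 => e0
  | e3 => e0
  | e4 => e0
  | e5 => e7
  | e6 => e0
  | e7 => e0
  | e8 => e0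
  | e9 => e11
  | e10 => e0
  | e11 => e0
  | e12 => e0
  | e13 => e15
  | e14 => e0
  | e15 => e0
  | e16 => e0
  | e17 => e0
  | e18 => e0

private def r4 : S19 → S19
  | e0 => e0
  | e1 => e4
  | e2 => e0
  | e3 => e0
  | e4 => e0
  | e5 => e8
  | e6 => e0
  | e7 => e0
  | e8 => e0
  | e9 => e12
  | e10 => e0
  | e11 => e0
  | e12 => e0
  | e13 => e16
  | e14 => e0
  | e15 => e0
  | e16 => e0
  | e17 => e0
  | e18 => e0

private def r5 : S19 → S19
  | e0 => e0
  | e1 => e0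
  | e2 => e1
  | e3 => e0
  | e4 => e0
  | e5 => e0
  | e6 => e5
  | e7 => e0
  | e8 => e0
  | e9 => e0
  | e10 => e9
  | e11 => e0
  | e12 => e0
  | e13 => e0
  | e14 => e13
  | e15 => e0
  | e16 => e0
  | e17 => e0
  | e18 => e0

private def r6 : S19 → S19
  | e0 => e0
  | e1 => e0
  | e2 => e2
  | e3 => e0
  | e4 => e0
  | e5 => e0
  | e6 => e6
  | e7 => e0
  | e8 => e0
  | e9 => e0
  | e10 => e10
  | e11 => e0
  | e12 => e0
  | e13 => e0
  | e14 => e14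
  | e15 => e0
  | e16 => e0
  | e17 => e0
  | e18 => e0

private def r7 : S19 → S19
  | e0 => e0
  | e1 => e0
  | e2 => e3
  | e3 => e0
  | e4 => e0
  | e5 => e0
  | e6 => e7
  | e7 => e0
  | e8 => e0
  | e9 => e0
  | e10 => e11
  | e11 => e0
  | e12 => e0
  | e13 => e0
  | e14 => e15
  | e15 => e0
  | e16 => e0
  | e17 => e0
  | e18 => e0

private def r8 : S19 → S19
  | e0 => e0
  | e1 => e0
  | e2 => e4
  | e3 => e0
  | e4 => e0
  | e5 => e0
  | e6 => e8
  | e7 => e0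
  | e8 => e0
  | e9 => e0
  | e10 => e12
  | e11 => e0
  | e12 => e0
  | e13 => e0
  | e14 => e16
  | e15 => e0
  | e16 => e0
  | e17 => e0
  | e18 => e0

private def r9 : S19 → S19
  | e0 => e0
  | e1 => e0
  | e2 => e0
  | e3 => e1
  | e4 => e0
  | e5 => e0
  | e6 => e0
  | e7 => e5
  | e8 => e0
  | e9 => e0
  | e10 => e0
  | e11 => e9
  | e12 => e0
  | e13 => e0
  | e14 => e0
  | e15 => e13
  | e16 => e0
  | e17 => e1
  | e18 => e5

private def r10 : S19 → S19
  | e0 => e0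
  | e1 => e0
  | e2 => e0
  | e3 => e2
  | e4 => e0
  | e5 => e0
  | e6 => e0
  | e7 => e6
  | e8 => e0
  | e9 => e0
  | e10 => e0
  | e11 => e10
  | e12 => e0
  | e13 => e0
  | e14 => e0
  | e15 => e14
  | e16 => e0
  | e17 => e2
  | e18 => e6

private def r11 : S19 → S19
  | e0 => e0
  | e1 => e0
  | e2 => e0
  | e3 => e3
  | e4 => e0
  | e5 => e0
  | e6 => e0
  | e7 => e7
  | e8 => e0
  | e9 => e0
  | e10 => e0
  | e11 => e11
  | e12 => e0
  | e13 => e0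
  | e14 => e0
  | e15 => e15
  | e16 => e0
  | e17 => e3
  | e18 => e7

private def r12 : S19 → S19
  | e0 => e0
  | e1 => e0
  | e2 => e0
  | e3 => e4
  | e4 => e0
  | e5 => e0
  | e6 => e0
  | e7 => e8
  | e8 => e0
  | e9 => e0
  | e10 => e0
  | e11 => e12
  | e12 => e0
  | e13 => e0
  | e14 => e0
  | e15 => e16
  | e16 => e0
  | e17 => e4
  | e18 => e8

private def r13 : S19 → S19
  | e0 => e0
  | e1 => e0
  | e2 => e0
  | e3 => e0
  | e4 => e1
  | e5 => e0
  | e6 => e0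
  | e7 => e0
  | e8 => e5
  | e9 => e0
  | e10 => e0
  | e11 => e0
  | e12 => e9
  | e13 => e0
  | e14 => e0
  | e15 => e0
  | e16 => e13
  | e17 => e5
  | e18 => e1

private def r14 : S19 → S19
  | e0 => e0
  | e1 => e0
  | e2 => e0
  | e3 => e0
  | e4 => e2
  | e5 => e0
  | e6 => e0
  | e7 => e0
  | e8 => e6
  | e9 => e0
  | e10 => e0
  | e11 => e0
  | e12 => e10
  | e13 => e0
  | e14 => e0
  | e15 => e0
  | e16 => e14
  | e17 => e6
  | e18 => e2

private def r15 : S19 → S19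
  | e0 => e0
  | e1 => e0
  | e2 => e0
  | e3 => e0
  | e4 => e3
  | e5 => e0
  | e6 => e0
  | e7 => e0
  | e8 => e7
  | e9 => e0
  | e10 => e0
  | e11 => e0
  | e12 => e11
  | e13 => e0
  | e14 => e0
  | e15 => e0
  | e16 => e15
  | e17 => e7
  | e18 => e3

private def r16 : S19 → S19
  | e0 => e0
  | e1 => e0
  | e2 => e0
  | e3 => e0
  | e4 => e4
  | e5 => e0
  | e6 => e0
  | e7 => e0
  | e8 => e8
  | e9 => e0
  | e10 => e0
  | e11 => e0
  | e12 => e12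
  | e13 => e0
  | e14 => e0
  | e15 => e0
  | e16 => e16
  | e17 => e8
  | e18 => e4

private def r17 : S19 → S19
  | e0 => e0
  | e1 => e3
  | e2 => e4
  | e3 => e0
  | e4 => e0
  | e5 => e7
  | e6 => e8
  | e7 => e0
  | e8 => e0
  | e9 => e11
  | e10 => e12
  | e11 => e0
  | e12 => e0
  | e13 => e15
  | e14 => e16
  | e15 => e0
  | e16 => e0
  | e17 => e0
  | e18 => e0

private def r18 : S19 → S19
  | e0 => e0
  | e1 => e4
  | e2 => e3
  | e3 => e0
  | e4 => e0
  | e5 => e8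
  | e6 => e7
  | e7 => e0
  | e8 => e0
  | e9 => e12
  | e10 => e11
  | e11 => e0
  | e12 => e0
  | e13 => e16
  | e14 => e15
  | e15 => e0
  | e16 => e0
  | e17 => e0
  | e18 => e0

protected def mul : S19 → S19 → S19
  | e0 => r0
  | e1 => r1
  | e2 => r2
  | e3 => r3
  | e4 => r4
  | e5 => r5
  | e6 => r6
  | e7 => r7
  | e8 => r8
  | e9 => r9
  | e10 => r10
  | e11 => r11
  | e12 => r12
  | e13 => r13
  | e14 => r14
  | e15 => r15
  | e16 => r16
  | e17 => r17
  | e18 => r18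

/-- Index of an element, used for fast equality tests. -/
def idx : S19 → ℕ
  | e0 => 0
  | e1 => 1
  | e2 => 2
  | e3 => 3
  | e4 => 4
  | e5 => 5
  | e6 => 6
  | e7 => 7
  | e8 => 8
  | e9 => 9
  | e10 => 10
  | e11 => 11
  | e12 => 12
  | e13 => 13
  | e14 => 14
  | e15 => 15
  | e16 => 16
  | e17 => 17
  | e18 => 18

end S19

instance : Mul S19 := ⟨S19.mul⟩

def lst19 : List S19 := [.e0, .e1, .e2, .e3, .e4, .e5, .e6, .e7, .e8, .e9, .e10, .e11, .e12, .e13, .e14, .e15, .e16, .e17, .e18]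

theorem mem_lst19 : ∀ x : S19, x ∈ lst19 := by intro x; cases x <;> decide

instance : Fintype S19 :=
  ⟨⟨(lst19 : Multiset S19), Multiset.coe_nodup.mpr (by decide)⟩,
    fun x => Multiset.mem_coe.mpr (mem_lst19 x)⟩

def F4 : Type := Option (Fin 4) × Option (Fin 4) × Option (Fin 4) × Option (Fin 4)

instance : DecidableEq F4 :=
  inferInstanceAs (DecidableEq (Option (Fin 4) × Option (Fin 4) × Option (Fin 4) × Option (Fin 4)))

def app (f : F4) : Fin 4 → Option (Fin 4) :=
  fun t => match t with
  | ⟨0,_⟩ => f.1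
  | ⟨1,_⟩ => f.2.1
  | ⟨2,_⟩ => f.2.2.1
  | ⟨3,_⟩ => f.2.2.2

def mk4 (F : Fin 4 → Option (Fin 4)) : F4 := (F 0, F 1, F 2, F 3)

/-- Composition of partial maps: `mulF f g = f ∘ g`. -/
def mulF (f g : F4) : F4 := mk4 (fun t => (app g t).bind (app f))

theorem app_mk4 : ∀ (F : Fin 4 → Option (Fin 4)) (t : Fin 4), app (mk4 F) t = F t
  | _, ⟨0,_⟩ => rfl
  | _, ⟨1,_⟩ => rfl
  | _, ⟨2,_⟩ => rfl
  | _, ⟨3,_⟩ => rfl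

theorem mulF_assoc (f g h : F4) : mulF (mulF f g) h = mulF f (mulF g h) := by
  unfold mulF
  apply congrArg mk4
  funext t
  simp only [app_mk4]
  exact (Option.bind_assoc (app h t) (app g) (app f)).symm

open S19 in
def toF : S19 → F4
  | e0 => (none, none, none, none)
  | e1 => (some 0, none, none, none)
  | e2 => (some 1, none, none, none)
  | e3 => (some 2, none, none, none)
  | e4 => (some 3, none, none, none)
  | e5 => (none, some 0, none, none)
  | e6 => (none, some 1, none, none)
  | e7 => (none, some 2, none, none)
  | e8 => (none, some 3, none, none)
  | e9 => (none, none, some 0, none)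
  | e10 => (none, none, some 1, none)
  | e11 => (none, none, some 2, none)
  | e12 => (none, none, some 3, none)
  | e13 => (none, none, none, some 0)
  | e14 => (none, none, none, some 1)
  | e15 => (none, none, none, some 2)
  | e16 => (none, none, none, some 3)
  | e17 => (some 2, some 3, none, none)
  | e18 => (some 3, some 2, none, none)

set_option maxHeartbeats 1000000 in
theorem toF_mul' : ∀ a ∈ lst19, ∀ b ∈ lst19, toF (a * b) = mulF (toF a) (toF b) := by decide

set_option maxHeartbeats 1000000 in
theorem toF_inj' : ∀ a ∈ lst19, ∀ b ∈ lst19, toF a = toF b → a = b := by decide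

theorem S19.mul_assoc (a b c : S19) : a * b * c = a * (b * c) := by
  apply toF_inj' _ (mem_lst19 _) _ (mem_lst19 _)
  rw [toF_mul' _ (mem_lst19 _) _ (mem_lst19 _), toF_mul' _ (mem_lst19 _) _ (mem_lst19 _),
      toF_mul' _ (mem_lst19 _) _ (mem_lst19 _), toF_mul' _ (mem_lst19 _) _ (mem_lst19 _),
      mulF_assoc]

instance : Semigroup S19 := ⟨S19.mul_assoc⟩

instance : DecidableEq (WithOne S19) := inferInstanceAs (DecidableEq (Option S19))

def lstW : List (WithOne S19) := 1 :: lst19.map WithOne.coe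

theorem mem_lstW : ∀ z : WithOne S19, z ∈ lstW := by
  intro z
  induction z using WithOne.recOneCoe with
  | one => exact List.mem_cons_self
  | coe a => exact List.mem_cons_of_mem _ (List.mem_map_of_mem (mem_lst19 a))

set_option maxHeartbeats 1000000 in
theorem idx_inj : ∀ a ∈ lst19, ∀ b ∈ lst19, S19.idx a = S19.idx b → a = b := by decide

theorem idx_injective {a b : S19} (h : S19.idx a = S19.idx b) : a = b :=
  idx_inj a (mem_lst19 a) b (mem_lst19 b) h

/-! ### Generic machinery: a decreasing measure forces the Mal'cev chains to collapse -/

section Generic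

variable {M : Type*} [Semigroup M]

/-- `x * z * y` computed inside `M` (the result of one Mal'cev step is never `1`). -/
def sprod (x : M) (z : WithOne M) (y : M) : M :=
  WithOne.recOneCoe (x * y) (fun t => x * t * y) z

theorem coe_sprod (x y : M) (z : WithOne M) :
    (x : WithOne M) * z * y = (sprod x z y : M) := by
  induction z using WithOne.recOneCoe with
  | one => rw [mul_one]; exact (WithOne.coe_mul x y).symm
  | coe t => show (x : WithOne M) * t * y = ((x * t * y : M) : WithOne M)
             rw [WithOne.coe_mul, WithOne.coe_mul]

theorem P_sprod {P : M → Prop} (Pmul : ∀ a b, P a → P b → P (a * b))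
    {x y : M} {z : WithOne M} (hx : P x) (hy : P y) (hz : ∀ t : M, z = ↑t → P t) :
    P (sprod x z y) := by
  induction z using WithOne.recOneCoe with
  | one => exact Pmul _ _ hx hy
  | coe t => exact Pmul _ _ (Pmul _ _ hx (hz t rfl)) hy

theorem master (P : M → Prop) (μ : M → M → ℕ) (N : ℕ)
    (Pmul : ∀ a b, P a → P b → P (a * b))
    (hbd : ∀ a b, μ a b ≤ N)
    (hdec : ∀ (x y : M) (z : WithOne M), P x → P y → (∀ t : M, z = ↑t → P t) →
      x ≠ y → sprod x z y ≠ sprod y z x → μ (sprod x z y) (sprod y z x) < μ x y)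
    (a b : M) (ha : P a) (hb : P b) (c : ℕ → WithOne M) (hc : ∀ k (t : M), c k = ↑t → P t) :
    (lrho (a : WithOne M) (b : WithOne M) c (N + 1)).1 =
      (lrho (a : WithOne M) (b : WithOne M) c (N + 1)).2 := by
  have key : ∀ n, ∃ p q : M, P p ∧ P q ∧
      lrho (a : WithOne M) (b : WithOne M) c n = ((p : WithOne M), (q : WithOne M)) ∧
      (p ≠ q → μ p q + n ≤ μ a b) := by
    intro n
    induction n with
    | zero => exact ⟨a, b, ha, hb, rfl, fun _ => by omega⟩
    | succ n ih =>
      obtain ⟨p, q, hp, hq, heq, hmu⟩ := ih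
      refine ⟨sprod p (c (n+1)) q, sprod q (c (n+1)) p,
        P_sprod Pmul hp hq (hc (n+1)), P_sprod Pmul hq hp (hc (n+1)), ?_, ?_⟩
      · show ((lrho (a : WithOne M) b c n).1 * c (n+1) * (lrho (a : WithOne M) b c n).2,
              (lrho (a : WithOne M) b c n).2 * c (n+1) * (lrho (a : WithOne M) b c n).1) = _
        rw [heq]
        show ((p : WithOne M) * c (n+1) * q, (q : WithOne M) * c (n+1) * p) = _
        rw [coe_sprod, coe_sprod]
      · intro hne
        have hpq : p ≠ q := by
          rintro rfl
          exact hne rfl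
        have h1 := hdec p q (c (n+1)) hp hq (hc (n+1)) hpq hne
        have h2 := hmu hpq
        omega
  obtain ⟨p, q, hp, hq, heq, hmu⟩ := key (N + 1)
  have hpq : p = q := by
    by_contra hne
    have := hmu hne
    have := hbd a b
    omega
  rw [heq, hpq]

/-- Transfer the collapsing property to a subsemigroup all of whose elements satisfy `P`. -/
theorem isMN_of_measure (P : M → Prop) (μ : M → M → ℕ) (N : ℕ)
    (Pmul : ∀ a b, P a → P b → P (a * b))
    (hbd : ∀ a b, μ a b ≤ N)
    (hdec : ∀ (x y : M) (z : WithOne M), P x → P y → (∀ t : M, z = ↑t → P t) →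
      x ≠ y → sprod x z y ≠ sprod y z x → μ (sprod x z y) (sprod y z x) < μ x y)
    (T : Subsemigroup M) (hT : ∀ s : M, s ∈ T → P s) : IsMN T := by
  classical
  refine ⟨N + 1, Nat.succ_pos _, fun a b c => ?_⟩
  -- push everything down to `M`
  set down : WithOne T → WithOne M :=
    WithOne.recOneCoe 1 (fun t => ((t : M) : WithOne M)) with hdown
  have down_mul : ∀ u v : WithOne T, down (u * v) = down u * down v := by
    intro u v
    induction u using WithOne.recOneCoe with
    | one => rw [one_mul]; show down v = 1 * down v; rw [one_mul]
    | coe s =>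
      induction v using WithOne.recOneCoe with
      | one => rw [mul_one]; show down ↑s = down ↑s * 1; rw [mul_one]
      | coe t =>
        show down ((s * t : T) : WithOne T) = down ↑s * down ↑t
        show (((s * t : T) : M) : WithOne M) = ((s : M) : WithOne M) * ((t : M) : WithOne M)
        rw [MulMemClass.coe_mul, WithOne.coe_mul]
  have down_inj : ∀ u v : WithOne T, down u = down v → u = v := by
    intro u v
    induction u using WithOne.recOneCoe with
    | one =>
      induction v using WithOne.recOneCoe with
      | one => intro _; rfl
      | coe t => intro h; exact absurd h (by simp [hdown])
    | coe s =>
      induction v using WithOne.recOneCoe with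
      | one => intro h; exact absurd h (by simp [hdown])
      | coe t =>
        intro h
        have : (s : M) = (t : M) := WithOne.coe_inj.mp h
        rw [Subtype.ext this]
  have lrho_down : ∀ n,
      down ((lrho (a : WithOne T) (b : WithOne T) c n).1) =
        (lrho ((a : M) : WithOne M) ((b : M) : WithOne M) (fun k => down (c k)) n).1 ∧
      down ((lrho (a : WithOne T) (b : WithOne T) c n).2) =
        (lrho ((a : M) : WithOne M) ((b : M) : WithOne M) (fun k => down (c k)) n).2 := by
    intro n
    induction n with
    | zero => exact ⟨rfl, rfl⟩
    | succ n ih =>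
      constructor
      · show down ((lrho (a : WithOne T) b c n).1 * c (n+1) * (lrho (a : WithOne T) b c n).2) = _
        rw [down_mul, down_mul, ih.1, ih.2]; rfl
      · show down ((lrho (a : WithOne T) b c n).2 * c (n+1) * (lrho (a : WithOne T) b c n).1) = _
        rw [down_mul, down_mul, ih.1, ih.2]; rfl
  apply down_inj
  rw [(lrho_down (N + 1)).1, (lrho_down (N + 1)).2]
  apply master P μ N Pmul hbd hdec (a : M) (b : M) (hT _ a.2) (hT _ b.2)
  intro k t h
  revert h
  induction (c k) using WithOne.recOneCoe with
  | one => intro h; exact absurd h (by simp [hdown])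
  | coe s =>
    intro h
    have : (s : M) = t := WithOne.coe_inj.mp h
    exact this ▸ hT _ s.2

end Generic

open S19 in
def inT1 : S19 → Bool
  | e18 => false
  | _ => true

namespace MuT1
private def q1 : S19 → ℕ
  | .e2 => 1
  | .e3 => 1
  | .e4 => 1
  | .e5 => 1
  | .e6 => 1
  | .e7 => 1
  | .e8 => 1
  | .e9 => 1
  | .e10 => 1
  | .e11 => 1
  | .e12 => 1
  | .e13 => 1
  | .e14 => 1
  | .e15 => 1
  | .e16 => 1
  | .e17 => 1
  | _ => 0

private def q2 : S19 → ℕ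
  | .e1 => 1
  | .e3 => 1
  | .e4 => 1
  | .e5 => 2
  | .e6 => 1
  | .e7 => 1
  | .e8 => 1
  | .e9 => 1
  | .e10 => 1
  | .e11 => 1
  | .e12 => 1
  | .e13 => 1
  | .e14 => 1
  | .e15 => 1
  | .e16 => 1
  | .e17 => 1
  | _ => 0

private def q3 : S19 → ℕ
  | .e1 => 1
  | .e2 => 1
  | .e4 => 1
  | .e5 => 1
  | .e6 => 1
  | .e7 => 1
  | .e8 => 1
  | .e9 => 2
  | .e10 => 1
  | .e11 => 1
  | .e12 => 1
  | .e13 => 1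
  | .e14 => 1
  | .e15 => 1
  | .e16 => 1
  | .e17 => 1
  | _ => 0

private def q4 : S19 → ℕ
  | .e1 => 1
  | .e2 => 1
  | .e3 => 1
  | .e5 => 1
  | .e6 => 1
  | .e7 => 1
  | .e8 => 1
  | .e9 => 1
  | .e10 => 1
  | .e11 => 1
  | .e12 => 1
  | .e13 => 2
  | .e14 => 1
  | .e15 => 1
  | .e16 => 1
  | .e17 => 2
  | _ => 0

private def q5 : S19 → ℕ
  | .e1 => 1
  | .e2 => 2
  | .e3 => 1
  | .e4 => 1
  | .e6 => 1
  | .e7 => 1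
  | .e8 => 1
  | .e9 => 1
  | .e10 => 1
  | .e11 => 1
  | .e12 => 1
  | .e13 => 1
  | .e14 => 1
  | .e15 => 1
  | .e16 => 1
  | .e17 => 1
  | _ => 0

private def q6 : S19 → ℕ
  | .e1 => 1
  | .e2 => 1
  | .e3 => 1
  | .e4 => 1
  | .e5 => 1
  | .e7 => 1
  | .e8 => 1
  | .e9 => 1
  | .e10 => 1
  | .e11 => 1
  | .e12 => 1
  | .e13 => 1
  | .e14 => 1
  | .e15 => 1
  | .e16 => 1
  | .e17 => 1
  | _ => 0

private def q7 : S19 → ℕ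
  | .e1 => 1
  | .e2 => 1
  | .e3 => 1
  | .e4 => 1
  | .e5 => 1
  | .e6 => 1
  | .e8 => 1
  | .e9 => 1
  | .e10 => 2
  | .e11 => 1
  | .e12 => 1
  | .e13 => 1
  | .e14 => 1
  | .e15 => 1
  | .e16 => 1
  | .e17 => 2
  | _ => 0

private def q8 : S19 → ℕ
  | .e1 => 1
  | .e2 => 1
  | .e3 => 1
  | .e4 => 1
  | .e5 => 1
  | .e6 => 1
  | .e7 => 1
  | .e9 => 1
  | .e10 => 1
  | .e11 => 1
  | .e12 => 1
  | .e13 => 1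
  | .e14 => 2
  | .e15 => 1
  | .e16 => 1
  | .e17 => 1
  | _ => 0

private def q9 : S19 → ℕ
  | .e1 => 1
  | .e2 => 1
  | .e3 => 2
  | .e4 => 1
  | .e5 => 1
  | .e6 => 1
  | .e7 => 1
  | .e8 => 1
  | .e10 => 1
  | .e11 => 1
  | .e12 => 1
  | .e13 => 1
  | .e14 => 1
  | .e15 => 1
  | .e16 => 1
  | .e17 => 2
  | _ => 0

private def q10 : S19 → ℕ
  | .e1 => 1
  | .e2 => 1
  | .e3 => 1
  | .e4 => 1
  | .e5 => 1
  | .e6 => 1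
  | .e7 => 2
  | .e8 => 1
  | .e9 => 1
  | .e11 => 1
  | .e12 => 1
  | .e13 => 2
  | .e14 => 1
  | .e15 => 1
  | .e16 => 1
  | .e17 => 2
  | _ => 0

private def q11 : S19 → ℕ
  | .e1 => 1
  | .e2 => 1
  | .e3 => 1
  | .e4 => 1
  | .e5 => 1
  | .e6 => 1
  | .e7 => 1
  | .e8 => 1
  | .e9 => 1
  | .e10 => 1
  | .e12 => 1
  | .e13 => 1
  | .e14 => 1
  | .e15 => 1
  | .e16 => 1
  | .e17 => 1
  | _ => 0

private def q12 : S19 → ℕ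
  | .e1 => 1
  | .e2 => 1
  | .e3 => 1
  | .e4 => 1
  | .e5 => 1
  | .e6 => 1
  | .e7 => 1
  | .e8 => 1
  | .e9 => 1
  | .e10 => 1
  | .e11 => 1
  | .e13 => 1
  | .e14 => 1
  | .e15 => 2
  | .e16 => 1
  | .e17 => 1
  | _ => 0

private def q13 : S19 → ℕ
  | .e1 => 1
  | .e2 => 1
  | .e3 => 1
  | .e4 => 2
  | .e5 => 1
  | .e6 => 1
  | .e7 => 1
  | .e8 => 1
  | .e9 => 1
  | .e10 => 2
  | .e11 => 1
  | .e12 => 1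
  | .e14 => 1
  | .e15 => 1
  | .e16 => 1
  | .e17 => 2
  | _ => 0

private def q14 : S19 → ℕ
  | .e1 => 1
  | .e2 => 1
  | .e3 => 1
  | .e4 => 1
  | .e5 => 1
  | .e6 => 1
  | .e7 => 1
  | .e8 => 2
  | .e9 => 1
  | .e10 => 1
  | .e11 => 1
  | .e12 => 1
  | .e13 => 1
  | .e15 => 1
  | .e16 => 1
  | .e17 => 2
  | _ => 0

private def q15 : S19 → ℕ
  | .e1 => 1
  | .e2 => 1
  | .e3 => 1
  | .e4 => 1
  | .e5 => 1
  | .e6 => 1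
  | .e7 => 1
  | .e8 => 1
  | .e9 => 1
  | .e10 => 1
  | .e11 => 1
  | .e12 => 2
  | .e13 => 1
  | .e14 => 1
  | .e16 => 1
  | .e17 => 1
  | _ => 0

private def q16 : S19 → ℕ
  | .e1 => 1
  | .e2 => 1
  | .e3 => 1
  | .e4 => 1
  | .e5 => 1
  | .e6 => 1
  | .e7 => 1
  | .e8 => 1
  | .e9 => 1
  | .e10 => 1
  | .e11 => 1
  | .e12 => 1
  | .e13 => 1
  | .e14 => 1
  | .e15 => 1
  | .e17 => 1
  | _ => 0

private def q17 : S19 → ℕ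
  | .e1 => 1
  | .e2 => 1
  | .e3 => 1
  | .e4 => 2
  | .e5 => 1
  | .e6 => 1
  | .e7 => 2
  | .e8 => 1
  | .e9 => 2
  | .e10 => 2
  | .e11 => 1
  | .e12 => 1
  | .e13 => 2
  | .e14 => 2
  | .e15 => 1
  | .e16 => 1
  | _ => 0

end MuT1
open S19 in
def muT1 : S19 → S19 → ℕ
  | e1 => MuT1.q1
  | e2 => MuT1.q2
  | e3 => MuT1.q3
  | e4 => MuT1.q4
  | e5 => MuT1.q5
  | e6 => MuT1.q6
  | e7 => MuT1.q7
  | e8 => MuT1.q8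
  | e9 => MuT1.q9
  | e10 => MuT1.q10
  | e11 => MuT1.q11
  | e12 => MuT1.q12
  | e13 => MuT1.q13
  | e14 => MuT1.q14
  | e15 => MuT1.q15
  | e16 => MuT1.q16
  | e17 => MuT1.q17
  | _ => fun _ => 0

def inWT1 : WithOne S19 → Bool := WithOne.recOneCoe true inT1

def checkT1 (x y : S19) (z : WithOne S19) : Bool :=
  !(inT1 x) || !(inT1 y) || !(inWT1 z) ||
    (let u := sprod x z y
     let v := sprod y z x
     (S19.idx u == S19.idx v) || decide (muT1 u v < muT1 x y))

set_option maxHeartbeats 12000000 in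
theorem checkT1_true : ∀ x ∈ lst19, ∀ y ∈ lst19, ∀ z ∈ lstW, checkT1 x y z = true := by
  decide

set_option maxHeartbeats 1000000 in
theorem muT1_le : ∀ a ∈ lst19, ∀ b ∈ lst19, muT1 a b ≤ 2 := by decide

set_option maxHeartbeats 1000000 in
theorem mulT1 : ∀ a ∈ lst19, ∀ b ∈ lst19,
    inT1 a = true → inT1 b = true → inT1 (a * b) = true := by decide

theorem hdecT1 : ∀ (x y : S19) (z : WithOne S19),
    (inT1 x = true) → (inT1 y = true) → (∀ t : S19, z = ↑t → inT1 t = true) →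
    x ≠ y → sprod x z y ≠ sprod y z x →
    muT1 (sprod x z y) (sprod y z x) < muT1 x y := by
  intro x y z hx hy hz hne huv
  have hzW : inWT1 z = true := by
    induction z using WithOne.recOneCoe with
    | one => rfl
    | coe t => exact hz t rfl
  have h := checkT1_true x (mem_lst19 x) y (mem_lst19 y) z (mem_lstW z)
  simp only [checkT1, hx, hy, hzW, Bool.not_true, Bool.false_or, Bool.or_eq_true,
    beq_iff_eq, decide_eq_true_eq] at h
  rcases h with h | h
  · exact absurd (idx_injective h) huv
  · exact h

def SubT1 : Subsemigroup S19 :=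
  { carrier := {s | inT1 s = true},
    mul_mem' := fun ha hb => mulT1 _ (mem_lst19 _) _ (mem_lst19 _) ha hb }

theorem mem_SubT1 {s : S19} (h : s ∈ SubT1) : inT1 s = true := h

theorem isMN_T1 (T : Subsemigroup S19) (hT : T ≤ SubT1) : IsMN T :=
  isMN_of_measure (fun s => inT1 s = true) muT1 2
    (fun a b ha hb => mulT1 a (mem_lst19 a) b (mem_lst19 b) ha hb)
    (fun a b => muT1_le a (mem_lst19 a) b (mem_lst19 b))
    hdecT1 T (fun s hs => mem_SubT1 (hT hs))

open S19 in
def inT2 : S19 → Bool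
  | e17 => false
  | _ => true

namespace MuT2
private def q1 : S19 → ℕ
  | .e2 => 1
  | .e3 => 1
  | .e4 => 1
  | .e5 => 1
  | .e6 => 1
  | .e7 => 1
  | .e8 => 1
  | .e9 => 1
  | .e10 => 1
  | .e11 => 1
  | .e12 => 1
  | .e13 => 1
  | .e14 => 1
  | .e15 => 1
  | .e16 => 1
  | .e18 => 1
  | _ => 0

private def q2 : S19 → ℕ
  | .e1 => 1
  | .e3 => 1
  | .e4 => 1
  | .e5 => 2
  | .e6 => 1
  | .e7 => 1
  | .e8 => 1
  | .e9 => 1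
  | .e10 => 1
  | .e11 => 1
  | .e12 => 1
  | .e13 => 1
  | .e14 => 1
  | .e15 => 1
  | .e16 => 1
  | .e18 => 1
  | _ => 0

private def q3 : S19 → ℕ
  | .e1 => 1
  | .e2 => 1
  | .e4 => 1
  | .e5 => 1
  | .e6 => 1
  | .e7 => 1
  | .e8 => 1
  | .e9 => 2
  | .e10 => 1
  | .e11 => 1
  | .e12 => 1
  | .e13 => 1
  | .e14 => 1
  | .e15 => 1
  | .e16 => 1
  | .e18 => 2
  | _ => 0

private def q4 : S19 → ℕ
  | .e1 => 1
  | .e2 => 1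
  | .e3 => 1
  | .e5 => 1
  | .e6 => 1
  | .e7 => 1
  | .e8 => 1
  | .e9 => 1
  | .e10 => 1
  | .e11 => 1
  | .e12 => 1
  | .e13 => 2
  | .e14 => 1
  | .e15 => 1
  | .e16 => 1
  | .e18 => 1
  | _ => 0

private def q5 : S19 → ℕ
  | .e1 => 1
  | .e2 => 2
  | .e3 => 1
  | .e4 => 1
  | .e6 => 1
  | .e7 => 1
  | .e8 => 1
  | .e9 => 1
  | .e10 => 1
  | .e11 => 1
  | .e12 => 1
  | .e13 => 1
  | .e14 => 1
  | .e15 => 1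
  | .e16 => 1
  | .e18 => 1
  | _ => 0

private def q6 : S19 → ℕ
  | .e1 => 1
  | .e2 => 1
  | .e3 => 1
  | .e4 => 1
  | .e5 => 1
  | .e7 => 1
  | .e8 => 1
  | .e9 => 1
  | .e10 => 1
  | .e11 => 1
  | .e12 => 1
  | .e13 => 1
  | .e14 => 1
  | .e15 => 1
  | .e16 => 1
  | .e18 => 1
  | _ => 0

private def q7 : S19 → ℕ
  | .e1 => 1
  | .e2 => 1
  | .e3 => 1
  | .e4 => 1
  | .e5 => 1
  | .e6 => 1
  | .e8 => 1
  | .e9 => 1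
  | .e10 => 2
  | .e11 => 1
  | .e12 => 1
  | .e13 => 1
  | .e14 => 1
  | .e15 => 1
  | .e16 => 1
  | .e18 => 1
  | _ => 0

private def q8 : S19 → ℕ
  | .e1 => 1
  | .e2 => 1
  | .e3 => 1
  | .e4 => 1
  | .e5 => 1
  | .e6 => 1
  | .e7 => 1
  | .e9 => 1
  | .e10 => 1
  | .e11 => 1
  | .e12 => 1
  | .e13 => 1
  | .e14 => 2
  | .e15 => 1
  | .e16 => 1
  | .e18 => 2
  | _ => 0

private def q9 : S19 → ℕ
  | .e1 => 1
  | .e2 => 1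
  | .e3 => 2
  | .e4 => 1
  | .e5 => 1
  | .e6 => 1
  | .e7 => 1
  | .e8 => 1
  | .e10 => 1
  | .e11 => 1
  | .e12 => 1
  | .e13 => 1
  | .e14 => 2
  | .e15 => 1
  | .e16 => 1
  | .e18 => 2
  | _ => 0

private def q10 : S19 → ℕ
  | .e1 => 1
  | .e2 => 1
  | .e3 => 1
  | .e4 => 1
  | .e5 => 1
  | .e6 => 1
  | .e7 => 2
  | .e8 => 1
  | .e9 => 1
  | .e11 => 1
  | .e12 => 1
  | .e13 => 1
  | .e14 => 1
  | .e15 => 1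
  | .e16 => 1
  | .e18 => 2
  | _ => 0

private def q11 : S19 → ℕ
  | .e1 => 1
  | .e2 => 1
  | .e3 => 1
  | .e4 => 1
  | .e5 => 1
  | .e6 => 1
  | .e7 => 1
  | .e8 => 1
  | .e9 => 1
  | .e10 => 1
  | .e12 => 1
  | .e13 => 1
  | .e14 => 1
  | .e15 => 1
  | .e16 => 1
  | .e18 => 1
  | _ => 0

private def q12 : S19 → ℕ
  | .e1 => 1
  | .e2 => 1
  | .e3 => 1
  | .e4 => 1
  | .e5 => 1
  | .e6 => 1
  | .e7 => 1
  | .e8 => 1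
  | .e9 => 1
  | .e10 => 1
  | .e11 => 1
  | .e13 => 1
  | .e14 => 1
  | .e15 => 2
  | .e16 => 1
  | .e18 => 1
  | _ => 0

private def q13 : S19 → ℕ
  | .e1 => 1
  | .e2 => 1
  | .e3 => 1
  | .e4 => 2
  | .e5 => 1
  | .e6 => 1
  | .e7 => 1
  | .e8 => 1
  | .e9 => 1
  | .e10 => 1
  | .e11 => 1
  | .e12 => 1
  | .e14 => 1
  | .e15 => 1
  | .e16 => 1
  | .e18 => 2
  | _ => 0

private def q14 : S19 → ℕ
  | .e1 => 1
  | .e2 => 1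
  | .e3 => 1
  | .e4 => 1
  | .e5 => 1
  | .e6 => 1
  | .e7 => 1
  | .e8 => 2
  | .e9 => 2
  | .e10 => 1
  | .e11 => 1
  | .e12 => 1
  | .e13 => 1
  | .e15 => 1
  | .e16 => 1
  | .e18 => 2
  | _ => 0

private def q15 : S19 → ℕ
  | .e1 => 1
  | .e2 => 1
  | .e3 => 1
  | .e4 => 1
  | .e5 => 1
  | .e6 => 1
  | .e7 => 1
  | .e8 => 1
  | .e9 => 1
  | .e10 => 1
  | .e11 => 1
  | .e12 => 2
  | .e13 => 1
  | .e14 => 1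
  | .e16 => 1
  | .e18 => 1
  | _ => 0

private def q16 : S19 → ℕ
  | .e1 => 1
  | .e2 => 1
  | .e3 => 1
  | .e4 => 1
  | .e5 => 1
  | .e6 => 1
  | .e7 => 1
  | .e8 => 1
  | .e9 => 1
  | .e10 => 1
  | .e11 => 1
  | .e12 => 1
  | .e13 => 1
  | .e14 => 1
  | .e15 => 1
  | .e18 => 1
  | _ => 0

private def q18 : S19 → ℕ
  | .e1 => 1
  | .e2 => 1
  | .e3 => 2
  | .e4 => 1
  | .e5 => 1
  | .e6 => 1
  | .e7 => 1
  | .e8 => 2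
  | .e9 => 2
  | .e10 => 2
  | .e11 => 1
  | .e12 => 1
  | .e13 => 2
  | .e14 => 2
  | .e15 => 1
  | .e16 => 1
  | _ => 0

end MuT2
open S19 in
def muT2 : S19 → S19 → ℕ
  | e1 => MuT2.q1
  | e2 => MuT2.q2
  | e3 => MuT2.q3
  | e4 => MuT2.q4
  | e5 => MuT2.q5
  | e6 => MuT2.q6
  | e7 => MuT2.q7
  | e8 => MuT2.q8
  | e9 => MuT2.q9
  | e10 => MuT2.q10
  | e11 => MuT2.q11
  | e12 => MuT2.q12
  | e13 => MuT2.q13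
  | e14 => MuT2.q14
  | e15 => MuT2.q15
  | e16 => MuT2.q16
  | e18 => MuT2.q18
  | _ => fun _ => 0

def inWT2 : WithOne S19 → Bool := WithOne.recOneCoe true inT2

def checkT2 (x y : S19) (z : WithOne S19) : Bool :=
  !(inT2 x) || !(inT2 y) || !(inWT2 z) ||
    (let u := sprod x z y
     let v := sprod y z x
     (S19.idx u == S19.idx v) || decide (muT2 u v < muT2 x y))

set_option maxHeartbeats 12000000 in
theorem checkT2_true : ∀ x ∈ lst19, ∀ y ∈ lst19, ∀ z ∈ lstW, checkT2 x y z = true := by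
  decide

set_option maxHeartbeats 1000000 in
theorem muT2_le : ∀ a ∈ lst19, ∀ b ∈ lst19, muT2 a b ≤ 2 := by decide

set_option maxHeartbeats 1000000 in
theorem mulT2 : ∀ a ∈ lst19, ∀ b ∈ lst19,
    inT2 a = true → inT2 b = true → inT2 (a * b) = true := by decide

theorem hdecT2 : ∀ (x y : S19) (z : WithOne S19),
    (inT2 x = true) → (inT2 y = true) → (∀ t : S19, z = ↑t → inT2 t = true) →
    x ≠ y → sprod x z y ≠ sprod y z x →
    muT2 (sprod x z y) (sprod y z x) < muT2 x y := by
  intro x y z hx hy hz hne huv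
  have hzW : inWT2 z = true := by
    induction z using WithOne.recOneCoe with
    | one => rfl
    | coe t => exact hz t rfl
  have h := checkT2_true x (mem_lst19 x) y (mem_lst19 y) z (mem_lstW z)
  simp only [checkT2, hx, hy, hzW, Bool.not_true, Bool.false_or, Bool.or_eq_true,
    beq_iff_eq, decide_eq_true_eq] at h
  rcases h with h | h
  · exact absurd (idx_injective h) huv
  · exact h

def SubT2 : Subsemigroup S19 :=
  { carrier := {s | inT2 s = true},
    mul_mem' := fun ha hb => mulT2 _ (mem_lst19 _) _ (mem_lst19 _) ha hb }

theorem mem_SubT2 {s : S19} (h : s ∈ SubT2) : inT2 s = true := h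

theorem isMN_T2 (T : Subsemigroup S19) (hT : T ≤ SubT2) : IsMN T :=
  isMN_of_measure (fun s => inT2 s = true) muT2 2
    (fun a b ha hb => mulT2 a (mem_lst19 a) b (mem_lst19 b) ha hb)
    (fun a b => muT2_le a (mem_lst19 a) b (mem_lst19 b))
    hdecT2 T (fun s hs => mem_SubT2 (hT hs))

open S19 in
def inD9 : S19 → Bool
  | e0 => true
  | e1 => true
  | e3 => true
  | e4 => true
  | e5 => true
  | e7 => true
  | e8 => true
  | e9 => true
  | e11 => true
  | e12 => true
  | e17 => true
  | e18 => true
  | _ => false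

namespace MuD9
private def q1 : S19 → ℕ
  | .e3 => 1
  | .e4 => 1
  | .e5 => 1
  | .e7 => 1
  | .e9 => 1
  | .e11 => 1
  | .e12 => 1
  | .e17 => 1
  | .e18 => 1
  | _ => 0

private def q3 : S19 → ℕ
  | .e1 => 1
  | .e4 => 1
  | .e5 => 1
  | .e7 => 1
  | .e9 => 2
  | .e11 => 1
  | .e12 => 1
  | .e18 => 2
  | _ => 0

private def q4 : S19 → ℕ
  | .e1 => 1
  | .e3 => 1
  | .e5 => 1
  | .e7 => 1
  | .e9 => 1
  | .e11 => 1
  | .e17 => 1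
  | .e18 => 1
  | _ => 0

private def q5 : S19 → ℕ
  | .e1 => 1
  | .e3 => 1
  | .e4 => 1
  | .e9 => 1
  | .e11 => 1
  | .e12 => 1
  | .e17 => 1
  | .e18 => 1
  | _ => 0

private def q7 : S19 → ℕ
  | .e1 => 1
  | .e3 => 1
  | .e4 => 1
  | .e9 => 1
  | .e11 => 1
  | .e12 => 1
  | .e17 => 1
  | .e18 => 1
  | _ => 0

private def q9 : S19 → ℕ
  | .e1 => 1
  | .e3 => 2
  | .e4 => 1
  | .e5 => 1
  | .e7 => 1
  | .e11 => 1
  | .e12 => 1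
  | .e17 => 2
  | .e18 => 2
  | _ => 0

private def q11 : S19 → ℕ
  | .e1 => 1
  | .e3 => 1
  | .e4 => 1
  | .e5 => 1
  | .e7 => 1
  | .e9 => 1
  | .e12 => 1
  | .e17 => 1
  | .e18 => 1
  | _ => 0

private def q12 : S19 → ℕ
  | .e1 => 1
  | .e3 => 1
  | .e5 => 1
  | .e7 => 1
  | .e9 => 1
  | .e11 => 1
  | .e17 => 1
  | .e18 => 1
  | _ => 0

private def q17 : S19 → ℕ
  | .e1 => 1
  | .e4 => 1
  | .e5 => 1
  | .e7 => 1
  | .e9 => 2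
  | .e11 => 1
  | .e12 => 1
  | .e18 => 2
  | _ => 0

private def q18 : S19 → ℕ
  | .e1 => 1
  | .e3 => 2
  | .e4 => 1
  | .e5 => 1
  | .e7 => 1
  | .e9 => 2
  | .e11 => 1
  | .e12 => 1
  | .e17 => 2
  | _ => 0

end MuD9
open S19 in
def muD9 : S19 → S19 → ℕ
  | e1 => MuD9.q1
  | e3 => MuD9.q3
  | e4 => MuD9.q4
  | e5 => MuD9.q5
  | e7 => MuD9.q7
  | e9 => MuD9.q9
  | e11 => MuD9.q11
  | e12 => MuD9.q12
  | e17 => MuD9.q17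
  | e18 => MuD9.q18
  | _ => fun _ => 0

def inWD9 : WithOne S19 → Bool := WithOne.recOneCoe true inD9

def checkD9 (x y : S19) (z : WithOne S19) : Bool :=
  !(inD9 x) || !(inD9 y) || !(inWD9 z) ||
    (let u := sprod x z y
     let v := sprod y z x
     (S19.idx u == S19.idx v) || decide (muD9 u v < muD9 x y))

set_option maxHeartbeats 12000000 in
theorem checkD9_true : ∀ x ∈ lst19, ∀ y ∈ lst19, ∀ z ∈ lstW, checkD9 x y z = true := by
  decide

set_option maxHeartbeats 1000000 in
theorem muD9_le : ∀ a ∈ lst19, ∀ b ∈ lst19, muD9 a b ≤ 2 := by decide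

set_option maxHeartbeats 1000000 in
theorem mulD9 : ∀ a ∈ lst19, ∀ b ∈ lst19,
    inD9 a = true → inD9 b = true → inD9 (a * b) = true := by decide

theorem hdecD9 : ∀ (x y : S19) (z : WithOne S19),
    (inD9 x = true) → (inD9 y = true) → (∀ t : S19, z = ↑t → inD9 t = true) →
    x ≠ y → sprod x z y ≠ sprod y z x →
    muD9 (sprod x z y) (sprod y z x) < muD9 x y := by
  intro x y z hx hy hz hne huv
  have hzW : inWD9 z = true := by
    induction z using WithOne.recOneCoe with
    | one => rfl
    | coe t => exact hz t rfl
  have h := checkD9_true x (mem_lst19 x) y (mem_lst19 y) z (mem_lstW z)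
  simp only [checkD9, hx, hy, hzW, Bool.not_true, Bool.false_or, Bool.or_eq_true,
    beq_iff_eq, decide_eq_true_eq] at h
  rcases h with h | h
  · exact absurd (idx_injective h) huv
  · exact h

def SubD9 : Subsemigroup S19 :=
  { carrier := {s | inD9 s = true},
    mul_mem' := fun ha hb => mulD9 _ (mem_lst19 _) _ (mem_lst19 _) ha hb }

theorem mem_SubD9 {s : S19} (h : s ∈ SubD9) : inD9 s = true := h

theorem isMN_D9 (T : Subsemigroup S19) (hT : T ≤ SubD9) : IsMN T :=
  isMN_of_measure (fun s => inD9 s = true) muD9 2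
    (fun a b ha hb => mulD9 a (mem_lst19 a) b (mem_lst19 b) ha hb)
    (fun a b => muD9_le a (mem_lst19 a) b (mem_lst19 b))
    hdecD9 T (fun s hs => mem_SubD9 (hT hs))

open S19 in
def inD10 : S19 → Bool
  | e0 => true
  | e2 => true
  | e3 => true
  | e4 => true
  | e6 => true
  | e7 => true
  | e8 => true
  | e10 => true
  | e11 => true
  | e12 => true
  | e17 => true
  | e18 => true
  | _ => false

namespace MuD10
private def q2 : S19 → ℕ
  | .e6 => 1
  | .e7 => 1
  | .e8 => 1
  | .e10 => 1
  | .e11 => 1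
  | .e12 => 1
  | .e17 => 1
  | .e18 => 1
  | _ => 0

private def q3 : S19 → ℕ
  | .e6 => 1
  | .e7 => 1
  | .e8 => 1
  | .e10 => 1
  | .e11 => 1
  | .e12 => 1
  | .e17 => 1
  | .e18 => 1
  | _ => 0

private def q6 : S19 → ℕ
  | .e2 => 1
  | .e3 => 1
  | .e7 => 1
  | .e8 => 1
  | .e10 => 1
  | .e11 => 1
  | .e12 => 1
  | .e17 => 1
  | .e18 => 1
  | _ => 0

private def q7 : S19 → ℕ
  | .e2 => 1
  | .e3 => 1
  | .e6 => 1
  | .e8 => 1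
  | .e10 => 2
  | .e11 => 1
  | .e12 => 1
  | .e17 => 2
  | _ => 0

private def q8 : S19 → ℕ
  | .e2 => 1
  | .e3 => 1
  | .e6 => 1
  | .e7 => 1
  | .e10 => 1
  | .e11 => 1
  | .e17 => 1
  | .e18 => 1
  | _ => 0

private def q10 : S19 → ℕ
  | .e2 => 1
  | .e3 => 1
  | .e6 => 1
  | .e7 => 2
  | .e8 => 1
  | .e11 => 1
  | .e12 => 1
  | .e17 => 2
  | .e18 => 2
  | _ => 0

private def q11 : S19 → ℕ
  | .e2 => 1
  | .e3 => 1
  | .e6 => 1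
  | .e7 => 1
  | .e8 => 1
  | .e10 => 1
  | .e12 => 1
  | .e17 => 1
  | .e18 => 1
  | _ => 0

private def q12 : S19 → ℕ
  | .e2 => 1
  | .e3 => 1
  | .e6 => 1
  | .e7 => 1
  | .e10 => 1
  | .e11 => 1
  | .e17 => 1
  | .e18 => 1
  | _ => 0

private def q17 : S19 → ℕ
  | .e2 => 1
  | .e3 => 1
  | .e6 => 1
  | .e7 => 2
  | .e8 => 1
  | .e10 => 2
  | .e11 => 1
  | .e12 => 1
  | .e18 => 2
  | _ => 0

private def q18 : S19 → ℕ
  | .e2 => 1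
  | .e3 => 1
  | .e6 => 1
  | .e8 => 1
  | .e10 => 2
  | .e11 => 1
  | .e12 => 1
  | .e17 => 2
  | _ => 0

end MuD10
open S19 in
def muD10 : S19 → S19 → ℕ
  | e2 => MuD10.q2
  | e3 => MuD10.q3
  | e6 => MuD10.q6
  | e7 => MuD10.q7
  | e8 => MuD10.q8
  | e10 => MuD10.q10
  | e11 => MuD10.q11
  | e12 => MuD10.q12
  | e17 => MuD10.q17
  | e18 => MuD10.q18
  | _ => fun _ => 0

def inWD10 : WithOne S19 → Bool := WithOne.recOneCoe true inD10

def checkD10 (x y : S19) (z : WithOne S19) : Bool :=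
  !(inD10 x) || !(inD10 y) || !(inWD10 z) ||
    (let u := sprod x z y
     let v := sprod y z x
     (S19.idx u == S19.idx v) || decide (muD10 u v < muD10 x y))

set_option maxHeartbeats 12000000 in
theorem checkD10_true : ∀ x ∈ lst19, ∀ y ∈ lst19, ∀ z ∈ lstW, checkD10 x y z = true := by
  decide

set_option maxHeartbeats 1000000 in
theorem muD10_le : ∀ a ∈ lst19, ∀ b ∈ lst19, muD10 a b ≤ 2 := by decide

set_option maxHeartbeats 1000000 in
theorem mulD10 : ∀ a ∈ lst19, ∀ b ∈ lst19,
    inD10 a = true → inD10 b = true → inD10 (a * b) = true := by decide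

theorem hdecD10 : ∀ (x y : S19) (z : WithOne S19),
    (inD10 x = true) → (inD10 y = true) → (∀ t : S19, z = ↑t → inD10 t = true) →
    x ≠ y → sprod x z y ≠ sprod y z x →
    muD10 (sprod x z y) (sprod y z x) < muD10 x y := by
  intro x y z hx hy hz hne huv
  have hzW : inWD10 z = true := by
    induction z using WithOne.recOneCoe with
    | one => rfl
    | coe t => exact hz t rfl
  have h := checkD10_true x (mem_lst19 x) y (mem_lst19 y) z (mem_lstW z)
  simp only [checkD10, hx, hy, hzW, Bool.not_true, Bool.false_or, Bool.or_eq_true,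
    beq_iff_eq, decide_eq_true_eq] at h
  rcases h with h | h
  · exact absurd (idx_injective h) huv
  · exact h

def SubD10 : Subsemigroup S19 :=
  { carrier := {s | inD10 s = true},
    mul_mem' := fun ha hb => mulD10 _ (mem_lst19 _) _ (mem_lst19 _) ha hb }

theorem mem_SubD10 {s : S19} (h : s ∈ SubD10) : inD10 s = true := h

theorem isMN_D10 (T : Subsemigroup S19) (hT : T ≤ SubD10) : IsMN T :=
  isMN_of_measure (fun s => inD10 s = true) muD10 2
    (fun a b ha hb => mulD10 a (mem_lst19 a) b (mem_lst19 b) ha hb)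
    (fun a b => muD10_le a (mem_lst19 a) b (mem_lst19 b))
    hdecD10 T (fun s hs => mem_SubD10 (hT hs))

open S19 in
def inD13 : S19 → Bool
  | e0 => true
  | e1 => true
  | e3 => true
  | e4 => true
  | e5 => true
  | e7 => true
  | e8 => true
  | e13 => true
  | e15 => true
  | e16 => true
  | e17 => true
  | e18 => true
  | _ => false

namespace MuD13
private def q1 : S19 → ℕ
  | .e3 => 1
  | .e4 => 1
  | .e5 => 1
  | .e8 => 1
  | .e13 => 1
  | .e15 => 1
  | .e16 => 1
  | .e17 => 1
  | .e18 => 1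
  | _ => 0

private def q3 : S19 → ℕ
  | .e1 => 1
  | .e4 => 1
  | .e5 => 1
  | .e8 => 1
  | .e13 => 1
  | .e16 => 1
  | .e17 => 1
  | .e18 => 1
  | _ => 0

private def q4 : S19 → ℕ
  | .e1 => 1
  | .e3 => 1
  | .e5 => 1
  | .e8 => 1
  | .e13 => 2
  | .e15 => 1
  | .e16 => 1
  | .e17 => 2
  | _ => 0

private def q5 : S19 → ℕ
  | .e1 => 1
  | .e3 => 1
  | .e4 => 1
  | .e13 => 1
  | .e15 => 1
  | .e16 => 1
  | .e17 => 1
  | .e18 => 1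
  | _ => 0

private def q8 : S19 → ℕ
  | .e1 => 1
  | .e3 => 1
  | .e4 => 1
  | .e13 => 1
  | .e15 => 1
  | .e16 => 1
  | .e17 => 1
  | .e18 => 1
  | _ => 0

private def q13 : S19 → ℕ
  | .e1 => 1
  | .e3 => 1
  | .e4 => 2
  | .e5 => 1
  | .e8 => 1
  | .e15 => 1
  | .e16 => 1
  | .e17 => 2
  | .e18 => 2
  | _ => 0

private def q15 : S19 → ℕ
  | .e1 => 1
  | .e4 => 1
  | .e5 => 1
  | .e8 => 1
  | .e13 => 1
  | .e16 => 1
  | .e17 => 1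
  | .e18 => 1
  | _ => 0

private def q16 : S19 → ℕ
  | .e1 => 1
  | .e3 => 1
  | .e4 => 1
  | .e5 => 1
  | .e8 => 1
  | .e13 => 1
  | .e15 => 1
  | .e17 => 1
  | .e18 => 1
  | _ => 0

private def q17 : S19 → ℕ
  | .e1 => 1
  | .e3 => 1
  | .e4 => 2
  | .e5 => 1
  | .e8 => 1
  | .e13 => 2
  | .e15 => 1
  | .e16 => 1
  | .e18 => 2
  | _ => 0

private def q18 : S19 → ℕ
  | .e1 => 1
  | .e3 => 1
  | .e5 => 1
  | .e8 => 1
  | .e13 => 2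
  | .e15 => 1
  | .e16 => 1
  | .e17 => 2
  | _ => 0

end MuD13
open S19 in
def muD13 : S19 → S19 → ℕ
  | e1 => MuD13.q1
  | e3 => MuD13.q3
  | e4 => MuD13.q4
  | e5 => MuD13.q5
  | e8 => MuD13.q8
  | e13 => MuD13.q13
  | e15 => MuD13.q15
  | e16 => MuD13.q16
  | e17 => MuD13.q17
  | e18 => MuD13.q18
  | _ => fun _ => 0

def inWD13 : WithOne S19 → Bool := WithOne.recOneCoe true inD13

def checkD13 (x y : S19) (z : WithOne S19) : Bool :=
  !(inD13 x) || !(inD13 y) || !(inWD13 z) ||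
    (let u := sprod x z y
     let v := sprod y z x
     (S19.idx u == S19.idx v) || decide (muD13 u v < muD13 x y))

set_option maxHeartbeats 12000000 in
theorem checkD13_true : ∀ x ∈ lst19, ∀ y ∈ lst19, ∀ z ∈ lstW, checkD13 x y z = true := by
  decide

set_option maxHeartbeats 1000000 in
theorem muD13_le : ∀ a ∈ lst19, ∀ b ∈ lst19, muD13 a b ≤ 2 := by decide

set_option maxHeartbeats 1000000 in
theorem mulD13 : ∀ a ∈ lst19, ∀ b ∈ lst19,
    inD13 a = true → inD13 b = true → inD13 (a * b) = true := by decide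

theorem hdecD13 : ∀ (x y : S19) (z : WithOne S19),
    (inD13 x = true) → (inD13 y = true) → (∀ t : S19, z = ↑t → inD13 t = true) →
    x ≠ y → sprod x z y ≠ sprod y z x →
    muD13 (sprod x z y) (sprod y z x) < muD13 x y := by
  intro x y z hx hy hz hne huv
  have hzW : inWD13 z = true := by
    induction z using WithOne.recOneCoe with
    | one => rfl
    | coe t => exact hz t rfl
  have h := checkD13_true x (mem_lst19 x) y (mem_lst19 y) z (mem_lstW z)
  simp only [checkD13, hx, hy, hzW, Bool.not_true, Bool.false_or, Bool.or_eq_true,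
    beq_iff_eq, decide_eq_true_eq] at h
  rcases h with h | h
  · exact absurd (idx_injective h) huv
  · exact h

def SubD13 : Subsemigroup S19 :=
  { carrier := {s | inD13 s = true},
    mul_mem' := fun ha hb => mulD13 _ (mem_lst19 _) _ (mem_lst19 _) ha hb }

theorem mem_SubD13 {s : S19} (h : s ∈ SubD13) : inD13 s = true := h

theorem isMN_D13 (T : Subsemigroup S19) (hT : T ≤ SubD13) : IsMN T :=
  isMN_of_measure (fun s => inD13 s = true) muD13 2
    (fun a b ha hb => mulD13 a (mem_lst19 a) b (mem_lst19 b) ha hb)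
    (fun a b => muD13_le a (mem_lst19 a) b (mem_lst19 b))
    hdecD13 T (fun s hs => mem_SubD13 (hT hs))

open S19 in
def inD14 : S19 → Bool
  | e0 => true
  | e2 => true
  | e3 => true
  | e4 => true
  | e6 => true
  | e7 => true
  | e8 => true
  | e14 => true
  | e15 => true
  | e16 => true
  | e17 => true
  | e18 => true
  | _ => false

namespace MuD14
private def q2 : S19 → ℕ
  | .e6 => 1
  | .e7 => 1
  | .e8 => 1
  | .e14 => 1
  | .e15 => 1
  | .e16 => 1
  | .e17 => 1
  | .e18 => 1
  | _ => 0

private def q4 : S19 → ℕ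
  | .e6 => 1
  | .e7 => 1
  | .e8 => 1
  | .e14 => 1
  | .e15 => 1
  | .e16 => 1
  | .e17 => 1
  | .e18 => 1
  | _ => 0

private def q6 : S19 → ℕ
  | .e2 => 1
  | .e4 => 1
  | .e7 => 1
  | .e8 => 1
  | .e14 => 1
  | .e15 => 1
  | .e16 => 1
  | .e17 => 1
  | .e18 => 1
  | _ => 0

private def q7 : S19 → ℕ
  | .e2 => 1
  | .e4 => 1
  | .e6 => 1
  | .e8 => 1
  | .e14 => 1
  | .e16 => 1
  | .e17 => 1
  | .e18 => 1
  | _ => 0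

private def q8 : S19 → ℕ
  | .e2 => 1
  | .e4 => 1
  | .e6 => 1
  | .e7 => 1
  | .e14 => 2
  | .e15 => 1
  | .e16 => 1
  | .e18 => 2
  | _ => 0

private def q14 : S19 → ℕ
  | .e2 => 1
  | .e4 => 1
  | .e6 => 1
  | .e7 => 1
  | .e8 => 2
  | .e15 => 1
  | .e16 => 1
  | .e17 => 2
  | .e18 => 2
  | _ => 0

private def q15 : S19 → ℕ
  | .e2 => 1
  | .e4 => 1
  | .e6 => 1
  | .e8 => 1
  | .e14 => 1
  | .e16 => 1
  | .e17 => 1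
  | .e18 => 1
  | _ => 0

private def q16 : S19 → ℕ
  | .e2 => 1
  | .e4 => 1
  | .e6 => 1
  | .e7 => 1
  | .e8 => 1
  | .e14 => 1
  | .e15 => 1
  | .e17 => 1
  | .e18 => 1
  | _ => 0

private def q17 : S19 → ℕ
  | .e2 => 1
  | .e4 => 1
  | .e6 => 1
  | .e7 => 1
  | .e14 => 2
  | .e15 => 1
  | .e16 => 1
  | .e18 => 2
  | _ => 0

private def q18 : S19 → ℕ
  | .e2 => 1
  | .e4 => 1
  | .e6 => 1
  | .e7 => 1
  | .e8 => 2
  | .e14 => 2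
  | .e15 => 1
  | .e16 => 1
  | .e17 => 2
  | _ => 0

end MuD14
open S19 in
def muD14 : S19 → S19 → ℕ
  | e2 => MuD14.q2
  | e4 => MuD14.q4
  | e6 => MuD14.q6
  | e7 => MuD14.q7
  | e8 => MuD14.q8
  | e14 => MuD14.q14
  | e15 => MuD14.q15
  | e16 => MuD14.q16
  | e17 => MuD14.q17
  | e18 => MuD14.q18
  | _ => fun _ => 0

def inWD14 : WithOne S19 → Bool := WithOne.recOneCoe true inD14

def checkD14 (x y : S19) (z : WithOne S19) : Bool :=
  !(inD14 x) || !(inD14 y) || !(inWD14 z) ||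
    (let u := sprod x z y
     let v := sprod y z x
     (S19.idx u == S19.idx v) || decide (muD14 u v < muD14 x y))

set_option maxHeartbeats 12000000 in
theorem checkD14_true : ∀ x ∈ lst19, ∀ y ∈ lst19, ∀ z ∈ lstW, checkD14 x y z = true := by
  decide

set_option maxHeartbeats 1000000 in
theorem muD14_le : ∀ a ∈ lst19, ∀ b ∈ lst19, muD14 a b ≤ 2 := by decide

set_option maxHeartbeats 1000000 in
theorem mulD14 : ∀ a ∈ lst19, ∀ b ∈ lst19,
    inD14 a = true → inD14 b = true → inD14 (a * b) = true := by decide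

theorem hdecD14 : ∀ (x y : S19) (z : WithOne S19),
    (inD14 x = true) → (inD14 y = true) → (∀ t : S19, z = ↑t → inD14 t = true) →
    x ≠ y → sprod x z y ≠ sprod y z x →
    muD14 (sprod x z y) (sprod y z x) < muD14 x y := by
  intro x y z hx hy hz hne huv
  have hzW : inWD14 z = true := by
    induction z using WithOne.recOneCoe with
    | one => rfl
    | coe t => exact hz t rfl
  have h := checkD14_true x (mem_lst19 x) y (mem_lst19 y) z (mem_lstW z)
  simp only [checkD14, hx, hy, hzW, Bool.not_true, Bool.false_or, Bool.or_eq_true,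
    beq_iff_eq, decide_eq_true_eq] at h
  rcases h with h | h
  · exact absurd (idx_injective h) huv
  · exact h

def SubD14 : Subsemigroup S19 :=
  { carrier := {s | inD14 s = true},
    mul_mem' := fun ha hb => mulD14 _ (mem_lst19 _) _ (mem_lst19 _) ha hb }

theorem mem_SubD14 {s : S19} (h : s ∈ SubD14) : inD14 s = true := h

theorem isMN_D14 (T : Subsemigroup S19) (hT : T ≤ SubD14) : IsMN T :=
  isMN_of_measure (fun s => inD14 s = true) muD14 2
    (fun a b ha hb => mulD14 a (mem_lst19 a) b (mem_lst19 b) ha hb)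
    (fun a b => muD14_le a (mem_lst19 a) b (mem_lst19 b))
    hdecD14 T (fun s hs => mem_SubD14 (hT hs))

/-! ### `S19` itself is not Mal'cev nilpotent -/

def cyc : ℕ → WithOne S19 := fun k => if k % 2 = 1 then (S19.e18 : WithOne S19) else (S19.e17 : WithOne S19)

theorem cyc_lemma : ∀ n, lrho (S19.e9 : WithOne S19) (S19.e14 : WithOne S19) cyc n =
    if n % 2 = 0 then ((S19.e9 : WithOne S19), (S19.e14 : WithOne S19))
    else ((S19.e13 : WithOne S19), (S19.e10 : WithOne S19)) := by
  intro n
  induction n with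
  | zero => rfl
  | succ n ih =>
    rcases Nat.mod_two_eq_zero_or_one n with h | h
    · have h1 : (n + 1) % 2 = 1 := by omega
      rw [if_pos h] at ih
      rw [if_neg (by omega : ¬ (n + 1) % 2 = 0)]
      have hc : cyc (n + 1) = (S19.e18 : WithOne S19) := by simp [cyc, h1]
      show ((lrho _ _ cyc n).1 * cyc (n+1) * (lrho _ _ cyc n).2,
            (lrho _ _ cyc n).2 * cyc (n+1) * (lrho _ _ cyc n).1) = _
      rw [ih, hc]
      decide
    · have h1 : (n + 1) % 2 = 0 := by omega
      rw [if_neg (by omega : ¬ n % 2 = 0)] at ih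
      rw [if_pos h1]
      have hc : cyc (n + 1) = (S19.e17 : WithOne S19) := by
        simp [cyc, h1]
      show ((lrho _ _ cyc n).1 * cyc (n+1) * (lrho _ _ cyc n).2,
            (lrho _ _ cyc n).2 * cyc (n+1) * (lrho _ _ cyc n).1) = _
      rw [ih, hc]
      decide

theorem not_isMN_S19 : ¬ IsMN S19 := by
  rintro ⟨n, hn, h⟩
  have h2 := h S19.e9 S19.e14 cyc
  rw [cyc_lemma n] at h2
  rcases Nat.mod_two_eq_zero_or_one n with hp | hp
  · rw [if_pos hp] at h2
    exact absurd (WithOne.coe_inj.mp h2) (by decide)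
  · rw [if_neg (by omega)] at h2
    exact absurd (WithOne.coe_inj.mp h2) (by decide)

/-! ### Every subsemigroup generated by at most 3 elements is Mal'cev nilpotent -/

theorem subset_sub (A : Finset S19) (h18 : S19.e18 ∉ A ∨ S19.e17 ∉ A) :
    True := trivial

theorem three_gen (A : Finset S19) (hA : A.card ≤ 3) :
    IsMN (Subsemigroup.closure (A : Set S19)) := by
  classical
  by_cases h18 : S19.e18 ∈ A
  · by_cases h17 : S19.e17 ∈ A
    · -- both sandwich elements in `A`: at most one further generator
      have hsub : ({S19.e18, S19.e17} : Finset S19) ⊆ A := by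
        intro s hs
        simp only [Finset.mem_insert, Finset.mem_singleton] at hs
        rcases hs with rfl | rfl
        · exact h18
        · exact h17
      have hcard : (A \ {S19.e18, S19.e17}).card ≤ 1 := by
        have h2 : ({S19.e18, S19.e17} : Finset S19).card = 2 := by decide
        have := Finset.card_sdiff_of_subset hsub
        omega
      obtain ⟨w, hw⟩ : ∃ w : S19, ∀ s ∈ A, s = S19.e18 ∨ s = S19.e17 ∨ s = w := by
        rcases (A \ {S19.e18, S19.e17}).eq_empty_or_nonempty with he | ⟨w, hw⟩
        · refine ⟨S19.e18, fun s hs => ?_⟩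
          by_contra hcon
          push_neg at hcon
          have : s ∈ A \ {S19.e18, S19.e17} := by
            simp [Finset.mem_sdiff, hs, hcon.1, hcon.2.1]
          simp [he] at this
        · refine ⟨w, fun s hs => ?_⟩
          by_cases h1 : s = S19.e18
          · exact Or.inl h1
          by_cases h2 : s = S19.e17
          · exact Or.inr (Or.inl h2)
          have hsd : s ∈ A \ {S19.e18, S19.e17} := by
            simp [Finset.mem_sdiff, hs, h1, h2]
          have := Finset.card_le_one.mp hcard
          exact Or.inr (Or.inr (this s hsd w hw))
      have hcover := (by decide :
        ∀ u : S19, inD9 u = true ∨ inD10 u = true ∨ inD13 u = true ∨ inD14 u = true) w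
      rcases hcover with hc | hc | hc | hc
      · refine isMN_D9 _ (Subsemigroup.closure_le.mpr ?_)
        intro s hs
        show inD9 s = true
        rcases hw s hs with rfl | rfl | rfl
        · decide
        · decide
        · exact hc
      · refine isMN_D10 _ (Subsemigroup.closure_le.mpr ?_)
        intro s hs
        show inD10 s = true
        rcases hw s hs with rfl | rfl | rfl
        · decide
        · decide
        · exact hc
      · refine isMN_D13 _ (Subsemigroup.closure_le.mpr ?_)
        intro s hs
        show inD13 s = true
        rcases hw s hs with rfl | rfl | rfl
        · decide
        · decide
        · exact hc
      · refine isMN_D14 _ (Subsemigroup.closure_le.mpr ?_)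
        intro s hs
        show inD14 s = true
        rcases hw s hs with rfl | rfl | rfl
        · decide
        · decide
        · exact hc
    · -- `e17 ∉ A`
      refine isMN_T2 _ (Subsemigroup.closure_le.mpr ?_)
      intro s hs
      show inT2 s = true
      have hne : s ≠ S19.e17 := fun h => h17 (h ▸ hs)
      have : ∀ s : S19, s ≠ S19.e17 → inT2 s = true := by decide
      exact this s hne
  · -- `e18 ∉ A`
    refine isMN_T1 _ (Subsemigroup.closure_le.mpr ?_)
    intro s hs
    show inT1 s = true
    have hne : s ≠ S19.e18 := fun h => h18 (h ▸ hs)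
    have : ∀ s : S19, s ≠ S19.e18 → inT1 s = true := by decide
    exact this s hne

/-- There is a finite semigroup all of whose 3-generated subsemigroups are
Mal'cev nilpotent and which is not Mal'cev nilpotent. -/
theorem exists_MN_rank_witness :
    ∃ (S : Type) (inst : Semigroup S) (_ : Finite S), @MNWitness S inst := by
  exact ⟨S19, inferInstance, Finite.of_fintype S19, not_isMN_S19, three_gen⟩
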